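/- arXiv:1810.06376 — 2 statements merged into one kernel-verified Lean document; each statement's English description precedes it below -/
import Mathlib

section
/- For real numbers a, b, c with a ≠ 0 and b ≠ 0, define θ̃(a,b,c) = (1/2)·log[(e^{a+b+c} + e^{-a-b-c} + e^{-a-b+c} + e^{a+b-c}) / (e^{a-b+c} + e^{-a+b-c} + e^{-a+b+c} + e^{a-b-c})]. Then θ̃(a,b,c) ≠ 0. -/
open Real

theorem thetaTilde_ne_zero (a b c : ℝ) (ha : a ≠ 0) (hb : b ≠ 0) :
    (1 / 2) * log ((exp (a + b + c) + exp (-a - b - c) + exp (-a - b + c) + exp (a + b - c)) /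
        (exp (a - b + c) + exp (-a + b - c) + exp (-a + b + c) + exp (a - b - c))) ≠ 0 := by
  intro h
  set N := exp (a + b + c) + exp (-a - b - c) + exp (-a - b + c) + exp (a + b - c) with hNdef
  set D := exp (a - b + c) + exp (-a + b - c) + exp (-a + b + c) + exp (a - b - c) with hDdef
  have hNpos : 0 < N := by positivity
  have hDpos : 0 < D := by positivity
  have hL : log (N / D) = 0 := by
    rcases mul_eq_zero.mp h with h' | h'
    · norm_num at h'
    · exact h'
  have hq : 0 < N / D := div_pos hNpos hDpos
  rcases Real.log_eq_zero.mp hL with h' | h' | h'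
  · exact absurd h' (ne_of_gt hq)
  · have hND : N = D := by
      field_simp at h'
      linarith [h']
    have e1 : exp (a + b + c) = exp a * exp b * exp c := by rw [← exp_add, ← exp_add]
    have e2 : exp (-a - b - c) = exp (-a) * exp (-b) * exp (-c) := by
      rw [show (-a - b - c) = (-a) + (-b) + (-c) by ring, exp_add, exp_add]
    have e3 : exp (-a - b + c) = exp (-a) * exp (-b) * exp c := by
      rw [show (-a - b + c) = (-a) + (-b) + c by ring, exp_add, exp_add]
    have e4 : exp (a + b - c) = exp a * exp b * exp (-c) := by
      rw [show (a + b - c) = a + b + (-c) by ring, exp_add, exp_add]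
    have e5 : exp (a - b + c) = exp a * exp (-b) * exp c := by
      rw [show (a - b + c) = a + (-b) + c by ring, exp_add, exp_add]
    have e6 : exp (-a + b - c) = exp (-a) * exp b * exp (-c) := by
      rw [show (-a + b - c) = (-a) + b + (-c) by ring, exp_add, exp_add]
    have e7 : exp (-a + b + c) = exp (-a) * exp b * exp c := by
      rw [show (-a + b + c) = (-a) + b + c by ring, exp_add, exp_add]
    have e8 : exp (a - b - c) = exp a * exp (-b) * exp (-c) := by
      rw [show (a - b - c) = a + (-b) + (-c) by ring, exp_add, exp_add]
    have key : (exp a - exp (-a)) * (exp b - exp (-b)) * (exp c + exp (-c)) = 0 := by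
      have := hND
      rw [hNdef, hDdef, e1, e2, e3, e4, e5, e6, e7, e8] at this
      nlinarith [this]
    have ha' : exp a - exp (-a) ≠ 0 := by
      intro h0
      have : a = -a := exp_injective (by linarith)
      exact ha (by linarith)
    have hb' : exp b - exp (-b) ≠ 0 := by
      intro h0
      have : b = -b := exp_injective (by linarith)
      exact hb (by linarith)
    have hc' : exp c + exp (-c) ≠ 0 := by positivity
    exact (mul_ne_zero (mul_ne_zero ha' hb') hc') key
  · linarith
end

section
/- For real numbers a, b, c with a ≠ 0 and b ≠ 0, define θ̃(a,b,c) = (1/2)·log[(e^{a+b+c} + e^{-a-b-c} + e^{-a-b+c} + e^{a+b-c}) / (e^{a-b+c} + e^{-a+b-c} + e^{-a+b+c} + e^{a-b-c})]. Then θ̃(a,b,c) > 0 if and only if a·b > 0. -/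
open Real

theorem thetaTilde_pos_iff (a b c : ℝ) (ha : a ≠ 0) (hb : b ≠ 0) :
    0 < (1 / 2) * log ((exp (a + b + c) + exp (-a - b - c) + exp (-a - b + c) + exp (a + b - c)) /
        (exp (a - b + c) + exp (-a + b - c) + exp (-a + b + c) + exp (a - b - c)))
      ↔ 0 < a * b := by
  have hK : (0:ℝ) < exp c + exp (-c) := by positivity
  have hN : exp (a + b + c) + exp (-a - b - c) + exp (-a - b + c) + exp (a + b - c)
      = (exp (a + b) + exp (-(a + b))) * (exp c + exp (-c)) := by
    rw [show a + b + c = (a+b) + c by ring, show -a - b - c = (-(a+b)) + (-c) by ring,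
      show -a - b + c = (-(a+b)) + c by ring, show a + b - c = (a+b) + (-c) by ring]
    simp [exp_add]; ring
  have hD : exp (a - b + c) + exp (-a + b - c) + exp (-a + b + c) + exp (a - b - c)
      = (exp (a - b) + exp (-(a - b))) * (exp c + exp (-c)) := by
    rw [show a - b + c = (a-b) + c by ring, show -a + b - c = (-(a-b)) + (-c) by ring,
      show -a + b + c = (-(a-b)) + c by ring, show a - b - c = (a-b) + (-c) by ring]
    simp [exp_add]; ring
  rw [hN, hD]
  have hDpos : (0:ℝ) < (exp (a - b) + exp (-(a - b))) * (exp c + exp (-c)) := by positivity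
  have half : ∀ x : ℝ, (0 < (1/2) * x ↔ 0 < x) := fun x =>
    ⟨fun h => by linarith, fun h => by linarith⟩
  rw [half, Real.log_pos_iff (by positivity), lt_div_iff₀ hDpos, one_mul,
    mul_lt_mul_iff_left₀ hK]
  have hc : ∀ x : ℝ, exp x + exp (-x) = 2 * Real.cosh x := by
    intro x; rw [Real.cosh_eq]; ring
  rw [hc, hc, mul_lt_mul_iff_right₀ (by norm_num : (0:ℝ) < 2), Real.cosh_lt_cosh]
  rw [← abs_pos] at ha hb
  constructor <;> intro h <;> nlinarith [sq_abs (a-b), sq_abs (a+b), abs_nonneg (a-b), abs_nonneg (a+b), sq_nonneg (|a-b|+|a+b|)]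
end
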